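/- Let K be a field, V an n-dimensional K-vector space, and Λ ⊆ V a K-subspace of dimension k. Then there is a bijection between the set {x = (T₁,…,T_d, v₁,…,v_r) ∈ End_K(V)^d × V^r : Span_K(x) = Λ} and the product {y = (S₁,…,S_d, w₁,…,w_r) ∈ End_K(Λ)^d × Λ^r : Span_K(y) = Λ} × Hom_K(V/Λ, Λ)^d × End_K(V/Λ)^d. (Choosing a basis of V whose first k vectors span Λ, a tuple with span exactly Λ is precisely a block upper-triangular tuple whose diagonal (k×k)-data is a full-span tuple on Λ, the framing vectors lying in Λ, with arbitrary off-diagonal k×(n−k) blocks and arbitrary (n−k)×(n−k) blocks.) -/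

import Mathlib

/-- `tupleSpan K T v` is the `K`-linear span of all vectors of the form
`T i₁ ∘ ⋯ ∘ T iₘ (v j)`, where `m ≥ 0` and `1 ≤ j ≤ r`. -/
def tupleSpan (K : Type*) {V : Type*} [Field K] [AddCommGroup V] [Module K V]
    {d r : ℕ} (T : Fin d → Module.End K V) (v : Fin r → V) : Submodule K V :=
  Submodule.span K {w | ∃ (l : List (Fin d)) (j : Fin r), w = ((l.map T).prod) (v j)}

section Aux

variable {K V V' : Type*} [Field K] [AddCommGroup V] [Module K V]
  [AddCommGroup V'] [Module K V'] {d r : ℕ}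

lemma word_map (f : V →ₗ[K] V') (T : Fin d → Module.End K V) (T' : Fin d → Module.End K V')
    (hf : ∀ i, f ∘ₗ (T i : V →ₗ[K] V) = (T' i : V' →ₗ[K] V') ∘ₗ f) (l : List (Fin d)) (x : V) :
    f (((l.map T).prod) x) = ((l.map T').prod) (f x) := by
  induction l with
  | nil => simp
  | cons a t ih =>
      simp only [List.map_cons, List.prod_cons, Module.End.mul_apply]
      have h := LinearMap.congr_fun (hf a) ((t.map T).prod x)
      simp only [LinearMap.coe_comp, Function.comp_apply] at h
      rw [h, ih]

lemma tupleSpan_map (f : V →ₗ[K] V') (T : Fin d → Module.End K V) (T' : Fin d → Module.End K V')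
    (hf : ∀ i, f ∘ₗ (T i : V →ₗ[K] V) = (T' i : V' →ₗ[K] V') ∘ₗ f) (v : Fin r → V) :
    Submodule.map f (tupleSpan K T v) = tupleSpan K T' (fun j => f (v j)) := by
  rw [tupleSpan, Submodule.map_span, tupleSpan]
  congr 1
  ext w
  constructor
  · rintro ⟨_, ⟨l, j, rfl⟩, rfl⟩
    exact ⟨l, j, word_map f T T' hf l (v j)⟩
  · rintro ⟨l, j, rfl⟩
    exact ⟨(l.map T).prod (v j), ⟨l, j, rfl⟩, word_map f T T' hf l (v j)⟩

lemma mem_tupleSpan_self (T : Fin d → Module.End K V) (v : Fin r → V) (j : Fin r) :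
    v j ∈ tupleSpan K T v :=
  Submodule.subset_span ⟨[], j, by simp⟩

lemma tupleSpan_invariant (T : Fin d → Module.End K V) (v : Fin r → V) (i : Fin d) :
    ∀ a ∈ tupleSpan K T v, T i a ∈ tupleSpan K T v := by
  intro a ha
  have : Submodule.map (T i : V →ₗ[K] V) (tupleSpan K T v) ≤ tupleSpan K T v := by
    rw [tupleSpan, Submodule.map_span, Submodule.span_le]
    rintro _ ⟨_, ⟨l, j, rfl⟩, rfl⟩
    exact Submodule.subset_span ⟨i :: l, j, by simp [Module.End.mul_apply]⟩
  exact this ⟨a, ha, rfl⟩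

end Aux

/-- The set of tuples on `V` with span exactly `Λ` is in bijection with the product of the
set of full-span tuples on `Λ`, the space `Hom(V/Λ, Λ)^d` of off-diagonal blocks, and the
space `End(V/Λ)^d` of lower diagonal blocks. -/
theorem stmt_4 {K V : Type*} [Field K] [AddCommGroup V] [Module K V]
    [FiniteDimensional K V] {d r n k : ℕ} (hd : 1 ≤ d) (hr : 1 ≤ r)
    (hdim : Module.finrank K V = n)
    (Λ : Submodule K V) (hΛ : Module.finrank K Λ = k) :
    Nonempty
      ({x : (Fin d → Module.End K V) × (Fin r → V) // tupleSpan K x.1 x.2 = Λ} ≃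
        ({y : (Fin d → Module.End K Λ) × (Fin r → Λ) // tupleSpan K y.1 y.2 = ⊤} ×
          (Fin d → ((V ⧸ Λ) →ₗ[K] Λ)) × (Fin d → Module.End K (V ⧸ Λ)))) := by
  classical
  obtain ⟨W, hW⟩ := Submodule.exists_isCompl Λ
  -- projections and section
  set π : V →ₗ[K] Λ := Λ.linearProjOfIsCompl W hW with hπdef
  set πW : V →ₗ[K] W := W.linearProjOfIsCompl Λ hW.symm with hπWdef
  have hker : ∀ a : Λ, πW (a : V) = 0 := fun a =>
    Submodule.projectionOnto_apply_of_mem_right hW.symm a.2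
  have hπleft : ∀ a : Λ, π (a : V) = a := fun a =>
    Submodule.linearProjOfIsCompl_apply_left hW a
  have hsum : ∀ x : V, ((π x : V) + (πW x : V)) = x :=
    Submodule.projection_add_projection_eq_self hW
  -- the section s : V⧸Λ →ₗ V
  have hle : Λ ≤ LinearMap.ker (W.subtype ∘ₗ πW) := by
    intro a ha
    simp [LinearMap.mem_ker, hker ⟨a, ha⟩]
  set s : (V ⧸ Λ) →ₗ[K] V := Λ.liftQ (W.subtype ∘ₗ πW) hle with hsdef
  have hs_mk : ∀ x : V, s (Λ.mkQ x) = (πW x : V) := fun x => by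
    simp [hsdef, Submodule.liftQ_apply]
  have hmk_s : ∀ ξ : V ⧸ Λ, Λ.mkQ (s ξ) = ξ := by
    intro ξ
    obtain ⟨x, rfl⟩ := Λ.mkQ_surjective ξ
    rw [hs_mk, Submodule.mkQ_apply, Submodule.mkQ_apply, Submodule.Quotient.eq]
    have h0 : ((π x : V)) + (((πW x : V)) - x) = 0 := by
      rw [← add_sub_assoc, hsum, sub_self]
    rw [eq_neg_of_add_eq_zero_right h0]
    exact Λ.neg_mem (π x).2
  -- forward data
  refine ⟨Equiv.mk ?_ ?_ ?_ ?_⟩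
  · -- toFun
    rintro ⟨⟨T, v⟩, hx⟩
    have hinv : ∀ i, ∀ a ∈ Λ, T i a ∈ Λ := by
      intro i a ha
      rw [← hx] at ha ⊢
      exact tupleSpan_invariant T v i a ha
    refine ⟨⟨⟨fun i => (T i).restrict (hinv i), fun j => ⟨v j, hx ▸ mem_tupleSpan_self T v j⟩⟩, ?_⟩,
      fun i => π ∘ₗ (T i : V →ₗ[K] V) ∘ₗ s, fun i => Submodule.mapQ Λ Λ (T i) (hinv i)⟩
    -- full span on Λ
    have hcomm : ∀ i, Λ.subtype ∘ₗ ((T i).restrict (hinv i) : Λ →ₗ[K] Λ)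
        = (T i : V →ₗ[K] V) ∘ₗ Λ.subtype := by
      intro i; ext a; simp [LinearMap.restrict_apply]
    have := tupleSpan_map Λ.subtype (fun i => (T i).restrict (hinv i)) T hcomm
      (fun j => ⟨v j, hx ▸ mem_tupleSpan_self T v j⟩)
    have htop : Submodule.map Λ.subtype (⊤ : Submodule K Λ) = Λ := by
      simp [Submodule.map_top, Submodule.range_subtype]
    apply Submodule.map_injective_of_injective Λ.injective_subtype
    rw [this, htop]
    exact hx
  · -- invFun
    rintro ⟨⟨⟨S, w⟩, hy⟩, B, Q⟩
    refine ⟨⟨fun i => (Λ.subtype ∘ₗ (S i : Λ →ₗ[K] Λ) ∘ₗ π)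
        + (Λ.subtype ∘ₗ B i ∘ₗ Λ.mkQ) + (s ∘ₗ (Q i : (V ⧸ Λ) →ₗ[K] (V ⧸ Λ)) ∘ₗ Λ.mkQ),
      fun j => (w j : V)⟩, ?_⟩
    have hcomm : ∀ i, ((Λ.subtype ∘ₗ (S i : Λ →ₗ[K] Λ) ∘ₗ π)
        + (Λ.subtype ∘ₗ B i ∘ₗ Λ.mkQ) + (s ∘ₗ (Q i : (V ⧸ Λ) →ₗ[K] (V ⧸ Λ)) ∘ₗ Λ.mkQ)) ∘ₗ Λ.subtype
        = Λ.subtype ∘ₗ (S i : Λ →ₗ[K] Λ) := by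
      intro i; ext a
      have h0 : Λ.mkQ ((a : V)) = 0 := (Submodule.Quotient.mk_eq_zero Λ).2 a.2
      simp [LinearMap.add_apply, hπleft a, h0]
    have := tupleSpan_map Λ.subtype S _ (fun i => (hcomm i).symm) w
    rw [hy, Submodule.map_top, Submodule.range_subtype] at this
    exact this.symm
  · -- left_inv
    rintro ⟨⟨T, v⟩, hx⟩
    apply Subtype.ext
    dsimp only
    refine Prod.ext (funext fun i => ?_) (funext fun j => rfl)
    apply LinearMap.ext; intro x
    have hinv : ∀ a ∈ Λ, T i a ∈ Λ := by
      intro a ha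
      rw [← hx] at ha ⊢
      exact tupleSpan_invariant T v i a ha
    simp only [LinearMap.add_apply, LinearMap.coe_comp, Function.comp_apply,
      LinearMap.restrict_apply, Submodule.coe_subtype, Submodule.mkQ_apply,
      Submodule.mapQ_apply, hs_mk]
    rw [show s (Submodule.Quotient.mk (T i x)) = ((πW (T i x) : V)) from hs_mk _]
    have e1 : ((πW (T i x)) : V) = (πW (T i ((πW x : V))) : V) := by
      conv_lhs => rw [← hsum x, map_add, map_add]
      have h0 : πW (T i ((π x : V))) = 0 := hker ⟨T i ((π x : V)), hinv _ (π x).2⟩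
      rw [h0]
      simp
    rw [e1]
    rw [show s ((Submodule.Quotient.mk x : V ⧸ Λ)) = ((πW x : V)) from hs_mk x]
    rw [add_assoc, hsum (T i ((πW x : V))), ← map_add, hsum]
  · -- right_inv
    rintro ⟨⟨⟨S, w⟩, hy⟩, B, Q⟩
    have hπW0 : ∀ ξ : V ⧸ Λ, π (s ξ) = 0 := by
      intro ξ
      obtain ⟨x, rfl⟩ := Λ.mkQ_surjective ξ
      rw [hs_mk]
      exact Submodule.projectionOnto_apply_of_mem_right hW (πW x).2
    refine Prod.ext ?_ (Prod.ext (funext fun i => ?_) (funext fun i => ?_))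
    · apply Subtype.ext
      refine Prod.ext (funext fun i => ?_) (funext fun j => Subtype.ext rfl)
      apply LinearMap.ext; intro a
      apply Subtype.ext
      simp only [LinearMap.restrict_apply, LinearMap.add_apply, LinearMap.coe_comp,
        Function.comp_apply, Submodule.coe_subtype, Submodule.mkQ_apply]
      have h0 : (Submodule.Quotient.mk (a : V) : V ⧸ Λ) = 0 :=
        (Submodule.Quotient.mk_eq_zero Λ).2 a.2
      rw [h0, hπleft a]
      simp
    · -- B component
      apply LinearMap.ext; intro ξ
      simp only [LinearMap.coe_comp, Function.comp_apply, LinearMap.add_apply,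
        Submodule.mkQ_apply]
      rw [show (Submodule.Quotient.mk (s ξ) : V ⧸ Λ) = ξ from hmk_s ξ]
      rw [hπW0 ξ]
      simp only [map_zero]
      rw [map_add, map_add, show π (Λ.subtype ((B i) ξ)) = (B i) ξ from hπleft _,
        show π (s ((Q i) ξ)) = 0 from hπW0 _]
      simp
    · -- Q component
      apply Submodule.linearMap_qext
      apply LinearMap.ext; intro x
      simp only [LinearMap.coe_comp, Function.comp_apply, Submodule.mkQ_apply,
        Submodule.mapQ_apply, LinearMap.add_apply]
      rw [Submodule.Quotient.mk_add, Submodule.Quotient.mk_add]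
      have h1 : ∀ a : Λ, (Submodule.Quotient.mk (a : V) : V ⧸ Λ) = 0 := fun a =>
        (Submodule.Quotient.mk_eq_zero Λ).2 a.2
      rw [show (Submodule.Quotient.mk (Λ.subtype ((S i) (π x))) : V ⧸ Λ) = 0 from h1 _,
        show (Submodule.Quotient.mk (Λ.subtype ((B i) (Submodule.Quotient.mk x))) : V ⧸ Λ)
          = 0 from h1 _]
      rw [show (Submodule.Quotient.mk
        (s ((Q i) (Submodule.Quotient.mk x))) : V ⧸ Λ) = (Q i) (Submodule.Quotient.mk x) from hmk_s _]
      simp
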